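/- Let (ℝ^m, ‖·‖) be a normed space whose unit sphere has a finite face decomposition, and P, A nonempty compact subsets with d(P,A) > 0 such that no segment [p,a] (p ∈ P, a ∈ A) is parallel to a nondegenerate line segment contained in the unit sphere. Then the directional distance is uniformly bounded away from parallelism: d(Ŵ(P,A), Ŝ) > 0, where Ŵ(P,A) = {±(a−p)/‖a−p‖ : p∈P, a∈A} and Ŝ = {(s'−s)/‖s'−s‖ : [s,s'] ⊆ unit sphere, s ≠ s'}. -/

import Mathlib

open Pointwise


/-- The distance between two sets: the infimum of pairwise distances. -/
noncomputable def setDist {E : Type*} [NormedAddCommGroup E] (P A : Set E) : ℝ :=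
  sInf (Set.image2 dist P A)

/-- A convex, symmetric set containing `0` absorbs every element of its span. -/
lemma span_absorb_aux {E : Type*} [AddCommGroup E] [Module ℝ E] {C : Set E}
    (hC : Convex ℝ C) (h0 : (0:E) ∈ C) (hsym : ∀ x ∈ C, -x ∈ C)
    {x : E} (hx : x ∈ Submodule.span ℝ C) :
    ∃ t : ℝ, 0 < t ∧ t • x ∈ C := by
  classical
  obtain ⟨n, f, g, hfg⟩ := Submodule.mem_span_set'.mp hx
  set s : ℝ := ∑ i, |f i| with hs
  have hs0 : 0 ≤ s := Finset.sum_nonneg fun i _ => abs_nonneg _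
  rcases eq_or_lt_of_le hs0 with h | h
  · have hall : ∀ i ∈ (Finset.univ : Finset (Fin n)), |f i| = 0 :=
      (Finset.sum_eq_zero_iff_of_nonneg (fun i _ => abs_nonneg _)).mp h.symm
    have hx0 : x = 0 := by
      rw [← hfg]
      apply Finset.sum_eq_zero
      intro i _
      rw [abs_eq_zero.mp (hall i (Finset.mem_univ i)), zero_smul]
    exact ⟨1, one_pos, by rw [hx0, smul_zero]; exact h0⟩
  · refine ⟨s⁻¹, inv_pos.mpr h, ?_⟩
    have hz : ∀ i : Fin n, Real.sign (f i) • (g i : E) ∈ C := by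
      intro i
      rcases Real.sign_apply_eq (f i) with hsg | hsg | hsg
      · rw [hsg, neg_smul, one_smul]; exact hsym _ (g i).2
      · rw [hsg, zero_smul]; exact h0
      · rw [hsg, one_smul]; exact (g i).2
    have key : s⁻¹ • x = ∑ i, (|f i| / s) • (Real.sign (f i) • (g i : E)) := by
      rw [← hfg, Finset.smul_sum]
      apply Finset.sum_congr rfl
      intro i _
      rw [smul_smul, smul_smul]
      congr 1
      rw [div_eq_inv_mul, mul_assoc]
      congr 1
      rcases lt_trichotomy (f i) 0 with hf | hf | hf
      · rw [abs_of_neg hf, Real.sign_of_neg hf]; ring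
      · rw [hf, abs_zero, Real.sign_zero, mul_zero]
      · rw [abs_of_pos hf, Real.sign_of_pos hf]; ring
    rw [key]
    apply hC.sum_mem
    · intro i _; positivity
    · rw [← Finset.sum_div, ← hs, div_self h.ne']
    · intro i _; exact hz i

/-- Any point of an open set `V` in `[0,1]` lies in a nondegenerate closed
interval contained in `V ∩ [0,1]`. -/
lemma open_interval_aux {V : Set ℝ} (hV : IsOpen V) {t : ℝ}
    (htV : t ∈ V) (ht : t ∈ Set.Icc (0:ℝ) 1) :
    ∃ a b : ℝ, a < b ∧ Set.Icc a b ⊆ V ∩ Set.Icc (0:ℝ) 1 := by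
  obtain ⟨ε, hε, hball⟩ := Metric.isOpen_iff.mp hV t htV
  by_cases h1 : t < 1
  · refine ⟨t, min (t + ε/2) 1, lt_min (by linarith) h1, ?_⟩
    rintro x ⟨hx1, hx2⟩
    have hxle : x ≤ t + ε/2 := hx2.trans (min_le_left _ _)
    refine ⟨hball ?_, ⟨le_trans ht.1 hx1, hx2.trans (min_le_right _ _)⟩⟩
    rw [Metric.mem_ball, Real.dist_eq, abs_lt]
    constructor <;> linarith
  · push_neg at h1
    have ht1 : t = 1 := le_antisymm ht.2 h1
    refine ⟨max (t - ε/2) 0, t, max_lt (by linarith) (by rw [ht1]; norm_num), ?_⟩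
    rintro x ⟨hx1, hx2⟩
    have hge : t - ε/2 ≤ x := le_trans (le_max_left _ _) hx1
    refine ⟨hball ?_, ⟨le_trans (le_max_right _ _) hx1, hx2.trans ht.2⟩⟩
    rw [Metric.mem_ball, Real.dist_eq, abs_lt]
    constructor <;> linarith

/-- Baire-type argument: every nondegenerate segment on the sphere contains two
distinct points (from the segment) in some face `F i`. -/
lemma exists_face_pair {E : Type*} [NormedAddCommGroup E] [NormedSpace ℝ E]
    {ℓ : ℕ} {F : Fin ℓ → Set E} {G : Set E}
    (hdecomp : Metric.sphere (0:E) 1 = (⋃ i, F i) ∪ G)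
    (hclosed : ∀ i, IsClosed (F i))
    (hGseg : ∀ a b : E, a ≠ b → ¬ segment ℝ a b ⊆ G)
    {s s' : E} (hne : s ≠ s') (hseg : segment ℝ s s' ⊆ Metric.sphere (0:E) 1) :
    ∃ i, ∃ a b : ℝ, a ≠ b ∧ s + a • (s' - s) ∈ F i ∧ s + b • (s' - s) ∈ F i := by
  classical
  set γ : ℝ → E := fun t => s + t • (s' - s) with hγ
  have hd0 : s' - s ≠ 0 := sub_ne_zero.mpr hne.symm
  have hγc : Continuous γ := continuous_const.add (continuous_id.smul continuous_const)
  have hmemseg : ∀ t : ℝ, t ∈ Set.Icc (0:ℝ) 1 → γ t ∈ segment ℝ s s' := by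
    intro t ht
    rw [segment_eq_image' ℝ s s']
    exact ⟨t, ht, rfl⟩
  have hγinj : ∀ a b : ℝ, a ≠ b → γ a ≠ γ b := by
    intro a b hab hEq
    apply hab
    have h1 : (a - b) • (s' - s) = 0 := by
      have h2 : γ a - γ b = 0 := sub_eq_zero.mpr hEq
      simp only [hγ] at h2
      rw [← h2]
      rw [sub_smul]
      abel_nf
    rcases smul_eq_zero.mp h1 with h | h
    · exact sub_eq_zero.mp h
    · exact absurd h hd0
  have hsubseg : ∀ a b : ℝ, segment ℝ (γ a) (γ b) ⊆ γ '' Set.Icc (min a b) (max a b) := by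
    intro a b x hx
    rw [segment_eq_image' ℝ (γ a) (γ b)] at hx
    obtain ⟨u, hu, rfl⟩ := hx
    refine ⟨a + u * (b - a), ⟨?_, ?_⟩, ?_⟩
    · rcases le_total a b with hab | hab
      · rw [min_eq_left hab]; nlinarith [hu.1, hu.2]
      · rw [min_eq_right hab]; nlinarith [hu.1, hu.2]
    · rcases le_total a b with hab | hab
      · rw [max_eq_right hab]; nlinarith [hu.1, hu.2]
      · rw [max_eq_left hab]; nlinarith [hu.1, hu.2]
    · simp only [hγ]; module
  -- The set of parameters in `[0,1]` hitting the faces covers everything.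
  set I : Set ℝ := Set.Icc (0:ℝ) 1 with hI
  set T : Fin ℓ → Set I := fun i => (fun t : I => γ (t : ℝ)) ⁻¹' (F i) with hT
  have hTclosed : ∀ i, IsClosed (T i) :=
    fun i => (hclosed i).preimage (hγc.comp continuous_subtype_val)
  have hcover : (⋃ i, T i) = Set.univ := by
    by_contra hcov
    obtain ⟨t₀, ht₀⟩ : ∃ t₀ : I, t₀ ∉ ⋃ i, T i := by
      by_contra hcon; push_neg at hcon
      exact hcov (Set.eq_univ_iff_forall.mpr hcon)
    set U : Set I := (⋃ i, T i)ᶜ with hU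
    have hUopen : IsOpen U := (isClosed_iUnion_of_finite hTclosed).isOpen_compl
    obtain ⟨V, hVopen, hVeq⟩ := isOpen_induced_iff.mp hUopen
    have htV : (t₀ : ℝ) ∈ V := by
      have ht₀' : t₀ ∈ U := ht₀
      rw [← hVeq] at ht₀'
      exact ht₀'
    obtain ⟨a, b, hab, hIcc⟩ := open_interval_aux hVopen htV t₀.2
    have hGsub : segment ℝ (γ a) (γ b) ⊆ G := by
      intro x hx
      obtain ⟨t, ht, rfl⟩ := hsubseg a b hx
      rw [min_eq_left hab.le, max_eq_right hab.le] at ht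
      have htVI : t ∈ V ∩ I := hIcc ht
      have htU : (⟨t, htVI.2⟩ : I) ∈ U := by rw [← hVeq]; exact htVI.1
      have hsph : γ t ∈ Metric.sphere (0:E) 1 := hseg (hmemseg t htVI.2)
      rw [hdecomp] at hsph
      rcases hsph with h | h
      · exfalso
        obtain ⟨i, hmem⟩ := Set.mem_iUnion.mp h
        exact htU (Set.mem_iUnion.mpr ⟨i, hmem⟩)
      · exact h
    exact hGseg _ _ (hγinj a b hab.ne) hGsub
  haveI : Nonempty I := ⟨⟨0, by constructor <;> norm_num⟩⟩
  obtain ⟨i, x₀, hx₀⟩ := nonempty_interior_of_iUnion_of_closed hTclosed hcover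
  obtain ⟨V, hVopen, hVeq⟩ := isOpen_induced_iff.mp (isOpen_interior (s := T i))
  have hx₀V : (x₀ : ℝ) ∈ V := by
    rw [← hVeq] at hx₀
    exact hx₀
  obtain ⟨a, b, hab, hIcc⟩ := open_interval_aux hVopen hx₀V x₀.2
  have hmemF : ∀ x : ℝ, x ∈ Set.Icc a b → γ x ∈ F i := by
    intro x hx
    have hxVI := hIcc hx
    have hint : (⟨x, hxVI.2⟩ : I) ∈ interior (T i) := by rw [← hVeq]; exact hxVI.1
    have := interior_subset hint
    exact this
  exact ⟨i, a, b, hab.ne, hmemF a ⟨le_refl a, hab.le⟩, hmemF b ⟨hab.le, le_refl b⟩⟩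

theorem directions_uniformly_far_from_sphere_directions
    {m : ℕ} {E : Type*} [NormedAddCommGroup E] [NormedSpace ℝ E]
    [FiniteDimensional ℝ E] (hdim : Module.finrank ℝ E = m)
    -- finite face decomposition of the unit sphere
    (ℓ : ℕ) (F : Fin ℓ → Set E) (G : Set E)
    (hdecomp : Metric.sphere (0 : E) 1 = (⋃ i, F i) ∪ G)
    (hclosed : ∀ i, IsClosed (F i))
    (hconv : ∀ i, Convex ℝ (F i))
    (hsub : ∀ i, F i ⊆ Metric.sphere (0 : E) 1)
    (hnotpt : ∀ i, ¬ (F i).Subsingleton)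
    (hmax : ∀ i, ∀ s s' : E, segment ℝ s s' ⊆ Metric.sphere (0 : E) 1 →
      (∃ t ∈ Set.Ioc (0 : ℝ) 1, segment ℝ s (s + t • (s' - s)) ⊆ F i) →
      segment ℝ s s' ⊆ F i)
    (hGseg : ∀ a b : E, a ≠ b → ¬ segment ℝ a b ⊆ G)
    (hGdisj : ∀ i, G ∩ F i = ∅)
    -- the sites
    (P A : Set E) (hP : P.Nonempty) (hA : A.Nonempty)
    (hPc : IsCompact P) (hAc : IsCompact A) (hd : 0 < setDist P A)
    -- general position: no connecting direction is a direction of a sphere segment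
    (hpar : {θ : E | ∃ p ∈ P, ∃ a ∈ A,
          (θ = ‖a - p‖⁻¹ • (a - p) ∨ θ = ‖p - a‖⁻¹ • (p - a))} ∩
        {θ : E | ∃ s s' : E, s ≠ s' ∧ segment ℝ s s' ⊆ Metric.sphere (0 : E) 1 ∧
          θ = ‖s' - s‖⁻¹ • (s' - s)} = ∅) :
    ∃ r : ℝ, 0 < r ∧
      ∀ w ∈ {θ : E | ∃ p ∈ P, ∃ a ∈ A,
          (θ = ‖a - p‖⁻¹ • (a - p) ∨ θ = ‖p - a‖⁻¹ • (p - a))},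
      ∀ s ∈ {θ : E | ∃ s s' : E, s ≠ s' ∧ segment ℝ s s' ⊆ Metric.sphere (0 : E) 1 ∧
          θ = ‖s' - s‖⁻¹ • (s' - s)},
        r ≤ ‖w - s‖ := by
  classical
  set Wset := {θ : E | ∃ p ∈ P, ∃ a ∈ A,
      (θ = ‖a - p‖⁻¹ • (a - p) ∨ θ = ‖p - a‖⁻¹ • (p - a))} with hWdef
  set Sset := {θ : E | ∃ s s' : E, s ≠ s' ∧ segment ℝ s s' ⊆ Metric.sphere (0 : E) 1 ∧
      θ = ‖s' - s‖⁻¹ • (s' - s)} with hSdef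
  -- each face is nontrivial
  have hFnt : ∀ i, (F i).Nontrivial := fun i => Set.not_subsingleton_iff.mp (hnotpt i)
  -- the spans of the difference sets
  set Hi : Fin ℓ → Submodule ℝ E := fun i => Submodule.span ℝ (F i - F i) with hHi
  set SS : Set E := ⋃ i, (Metric.sphere (0:E) 1 ∩ (Hi i : Set E)) with hSS
  -- Sset = SS
  have hSeq : Sset = SS := by
    apply Set.Subset.antisymm
    · rintro θ ⟨s, s', hne, hseg, rfl⟩
      obtain ⟨i, a, b, hab, ha, hb⟩ := exists_face_pair hdecomp hclosed hGseg hne hseg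
      have hds : s' - s ≠ 0 := sub_ne_zero.mpr hne.symm
      have hmem : (b - a) • (s' - s) ∈ Hi i := by
        apply Submodule.subset_span
        refine ⟨s + b • (s' - s), hb, s + a • (s' - s), ha, ?_⟩
        show (s + b • (s' - s)) - (s + a • (s' - s)) = (b - a) • (s' - s)
        module
      have hsmem : s' - s ∈ Hi i := by
        have := (Hi i).smul_mem (b - a)⁻¹ hmem
        rwa [smul_smul, inv_mul_cancel₀ (sub_ne_zero.mpr (Ne.symm hab)), one_smul] at this
      refine Set.mem_iUnion.mpr ⟨i, ?_, (Hi i).smul_mem _ hsmem⟩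
      rw [mem_sphere_zero_iff_norm, norm_smul, norm_inv, norm_norm,
        inv_mul_cancel₀ (norm_ne_zero_iff.mpr hds)]
    · intro θ hθ
      rw [hSS, Set.mem_iUnion] at hθ
      obtain ⟨i, hθs, hθH⟩ := hθ
      have hθ1 : ‖θ‖ = 1 := mem_sphere_zero_iff_norm.mp hθs
      have hθ0 : θ ≠ 0 := by intro h; rw [h, norm_zero] at hθ1; norm_num at hθ1
      obtain ⟨u, hu⟩ := (hFnt i).nonempty
      have hCconv : Convex ℝ (F i - F i) := (hconv i).sub (hconv i)
      have hC0 : (0:E) ∈ F i - F i := ⟨u, hu, u, hu, sub_self u⟩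
      have hCsym : ∀ x ∈ F i - F i, -x ∈ F i - F i := by
        rintro x ⟨p, hp, q, hq, rfl⟩
        exact ⟨q, hq, p, hp, by show q - p = -(p - q); abel⟩
      obtain ⟨t, ht, htC⟩ := span_absorb_aux hCconv hC0 hCsym hθH
      obtain ⟨v, hv, w, hw, hvw'⟩ := htC
      have hvw : v - w = t • θ := hvw'
      have hnevw : w ≠ v := by
        intro h
        rw [h, sub_self] at hvw
        exact hθ0 (by
          have := hvw.symm
          rcases smul_eq_zero.mp this with h' | h'
          · exact absurd h' ht.ne'
          · exact h')
      refine ⟨w, v, hnevw, ?_, ?_⟩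
      · exact fun x hx => hsub i ((hconv i).segment_subset hw hv hx)
      · have hnorm : ‖v - w‖ = t := by
          rw [hvw, norm_smul, hθ1, mul_one, Real.norm_eq_abs, abs_of_pos ht]
        rw [hnorm, hvw, smul_smul, inv_mul_cancel₀ ht.ne', one_smul]
  -- SS is closed
  have hSSclosed : IsClosed SS :=
    isClosed_iUnion_of_finite fun i =>
      Metric.isClosed_sphere.inter (Hi i).closed_of_finiteDimensional
  -- points of P and A are far apart
  have hdist : ∀ p ∈ P, ∀ a ∈ A, (0:ℝ) < ‖a - p‖ := by
    intro p hp a ha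
    have hle : setDist P A ≤ dist p a := by
      apply csInf_le
      · exact ⟨0, by rintro x ⟨p', _, a', _, rfl⟩; exact dist_nonneg⟩
      · exact Set.mem_image2_of_mem hp ha
    have : (0:ℝ) < dist p a := lt_of_lt_of_le hd hle
    rwa [dist_eq_norm, ← norm_neg, neg_sub] at this
  -- Wset is compact
  set f : E × E → E := fun q => ‖q.2 - q.1‖⁻¹ • (q.2 - q.1) with hf
  have hK : IsCompact (P ×ˢ A) := hPc.prod hAc
  have hfc : ContinuousOn f (P ×ˢ A) := by
    apply ContinuousOn.smul
    · apply ContinuousOn.inv₀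
      · exact (continuous_snd.sub continuous_fst).norm.continuousOn
      · rintro ⟨p, a⟩ ⟨hp, ha⟩
        exact (hdist p hp a ha).ne'
    · exact (continuous_snd.sub continuous_fst).continuousOn
  have hneg : ∀ p a : E, ‖p - a‖⁻¹ • (p - a) = -(‖a - p‖⁻¹ • (a - p)) := by
    intro p a
    rw [norm_sub_rev, ← smul_neg, neg_sub]
  have hWim : Wset = f '' (P ×ˢ A) ∪ (fun q => -f q) '' (P ×ˢ A) := by
    ext θ
    constructor
    · rintro ⟨p, hp, a, ha, h | h⟩
      · exact Or.inl ⟨(p, a), ⟨hp, ha⟩, h.symm⟩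
      · exact Or.inr ⟨(p, a), ⟨hp, ha⟩, by rw [h, hneg]⟩
    · rintro (⟨⟨p, a⟩, ⟨hp, ha⟩, rfl⟩ | ⟨⟨p, a⟩, ⟨hp, ha⟩, rfl⟩)
      · exact ⟨p, hp, a, ha, Or.inl rfl⟩
      · exact ⟨p, hp, a, ha, Or.inr (by show -f (p, a) = _; rw [hneg])⟩
  have hWc : IsCompact Wset := by
    rw [hWim]
    exact (hK.image_of_continuousOn hfc).union (hK.image_of_continuousOn hfc.neg)
  have hWne : Wset.Nonempty := by
    obtain ⟨p, hp⟩ := hP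
    obtain ⟨a, ha⟩ := hA
    exact ⟨‖a - p‖⁻¹ • (a - p), p, hp, a, ha, Or.inl rfl⟩
  -- disjointness
  have hdisj : ∀ w ∈ Wset, w ∉ SS := by
    intro w hw hwSS
    have : w ∈ Wset ∩ Sset := ⟨hw, by rw [hSeq]; exact hwSS⟩
    rw [hWdef, hSdef] at this
    rw [hpar] at this
    exact this
  by_cases hSne : SS.Nonempty
  · obtain ⟨w₀, hw₀, hmin⟩ :=
      hWc.exists_isMinOn hWne (Metric.continuous_infDist_pt SS).continuousOn
    refine ⟨Metric.infDist w₀ SS, ?_, ?_⟩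
    · exact (hSSclosed.notMem_iff_infDist_pos hSne).mp (hdisj w₀ hw₀)
    · intro w hw s hs
      have h1 : Metric.infDist w₀ SS ≤ Metric.infDist w SS := hmin hw
      have h2 : Metric.infDist w SS ≤ dist w s :=
        Metric.infDist_le_dist_of_mem (by rw [← hSeq]; exact hs)
      rw [dist_eq_norm] at h2
      linarith
  · refine ⟨1, one_pos, ?_⟩
    intro w hw s hs
    exfalso
    apply hSne
    exact ⟨s, by rw [← hSeq]; exact hs⟩
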